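/- For x, y in the upper half-plane, the mean-value symmetrization of the Apollonian weak metric equals the Poincaré metric: (1/2)(δ_{ℍ²}(x,y) + δ_{ℍ²}(y,x)) = (1/2) log((|x − ȳ| + |x − y|)/(|x − ȳ| − |x − y|)). -/

import Mathlib

open Complex


lemma abs_pos_of_im (x : ℂ) (hx : 0 < x.im) (a : ℝ) : 0 < ‖x - a‖ := by
  rw [norm_pos_iff]
  intro h
  have := congrArg Complex.im h
  simp at this; linarith

lemma key (x y : ℂ) (hx : 0 < x.im) (hy : 0 < y.im) :
    (⨆ a : ℝ, Real.log (‖x - (a : ℂ)‖ / ‖y - (a : ℂ)‖)) =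
      Real.log ((‖x - (starRingEnd ℂ) y‖ + ‖x - y‖) / (2 * y.im)) := by
  set A := ‖x - y‖ with hA
  set B := ‖x - (starRingEnd ℂ) y‖ with hB
  have hA2 : A^2 = (x.re - y.re)^2 + (x.im - y.im)^2 := by
    rw [hA, Complex.sq_norm, Complex.normSq_apply]
    simp only [Complex.sub_re, Complex.sub_im]; ring
  have hB2 : B^2 = (x.re - y.re)^2 + (x.im + y.im)^2 := by
    rw [hB, Complex.sq_norm, Complex.normSq_apply]
    simp only [Complex.sub_re, Complex.sub_im, Complex.conj_re, Complex.conj_im]; ring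
  have hAnn : 0 ≤ A := norm_nonneg _
  have hBnn : 0 ≤ B := norm_nonneg _
  have hd : B^2 - A^2 = 4 * x.im * y.im := by rw [hA2, hB2]; ring
  have hAB : A < B := by nlinarith
  have hABpos : 0 < B + A := by linarith
  set L : ℝ := (B + A) / (2 * y.im) with hL
  have hLpos : 0 < L := div_pos hABpos (by linarith)
  -- upper bound
  have ratio_le : ∀ a : ℝ, ‖x - a‖ / ‖y - a‖ ≤ L := by
    intro a
    have hya := abs_pos_of_im y hy a
    rw [hL, div_le_div_iff₀ hya (by linarith : (0:ℝ) < 2*y.im)]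
    have ident : (x - a) * ((starRingEnd ℂ) y - y)
        = (x - y)*((starRingEnd ℂ) y - a) + (y - a)*((starRingEnd ℂ) y - x) := by ring
    have h1 : ‖(starRingEnd ℂ) y - y‖ = 2 * y.im := by
      rw [show (starRingEnd ℂ) y - y = (-(2*y.im) : ℝ) * Complex.I by
        apply Complex.ext <;> simp <;> ring]
      rw [norm_mul, Complex.norm_I, Complex.norm_real, Real.norm_eq_abs, abs_of_nonpos (by linarith)]; ring
    have h2 : ‖(starRingEnd ℂ) y - a‖ = ‖y - a‖ := by
      rw [show (starRingEnd ℂ) y - (a:ℂ) = (starRingEnd ℂ) (y - a) by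
        simp [map_sub, Complex.conj_ofReal]]
      exact Complex.norm_conj _
    have h3 : ‖(starRingEnd ℂ) y - x‖ = B := by
      rw [hB, ← norm_neg]; ring_nf
    calc ‖x - a‖ * (2*y.im)
        = ‖(x - a) * ((starRingEnd ℂ) y - y)‖ := by rw [norm_mul, h1]
      _ = ‖(x - y)*((starRingEnd ℂ) y - a) + (y - a)*((starRingEnd ℂ) y - x)‖ := by
          rw [ident]
      _ ≤ A * ‖y - a‖ + ‖y - a‖ * B := by
          refine (norm_add_le _ _).trans ?_
          rw [norm_mul, norm_mul, h2, h3]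
      _ = (B + A) * ‖y - a‖ := by ring
  have log_le : ∀ a : ℝ, Real.log (‖x - a‖ / ‖y - a‖) ≤ Real.log L :=
    fun a => Real.log_le_log (div_pos (abs_pos_of_im x hx a) (abs_pos_of_im y hy a)) (ratio_le a)
  have bdd : BddAbove (Set.range fun a : ℝ =>
      Real.log (‖x - a‖ / ‖y - a‖)) := by
    refine ⟨Real.log L, ?_⟩
    rintro _ ⟨a, rfl⟩; exact log_le a
  have ratio_sq : ∀ a : ℝ, (‖x - a‖ / ‖y - a‖)^2
      = ((x.re - a)^2 + x.im^2) / ((y.re - a)^2 + y.im^2) := by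
    intro a
    rw [div_pow, Complex.sq_norm, Complex.sq_norm, Complex.normSq_apply, Complex.normSq_apply]
    simp only [Complex.sub_re, Complex.sub_im, Complex.ofReal_re, Complex.ofReal_im]
    ring_nf
  have attain : ∀ a : ℝ, (x.re - a)^2 + x.im^2 = L^2 * ((y.re - a)^2 + y.im^2) →
      Real.log (‖x - a‖ / ‖y - a‖) = Real.log L := by
    intro a h
    congr 1
    have h1 : (‖x - a‖ / ‖y - a‖)^2 = L^2 := by
      rw [ratio_sq a, h]
      have h2 : (0:ℝ) < (y.re - a)^2 + y.im^2 := by positivity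
      field_simp
    have h2 : 0 ≤ ‖x - a‖ / ‖y - a‖ := by positivity
    rw [← Real.sqrt_sq h2, ← Real.sqrt_sq hLpos.le, h1]
  have lower : Real.log L ≤ ⨆ a : ℝ, Real.log (‖x - a‖ / ‖y - a‖) := by
    by_cases hM : B + A = 2 * y.im
    · have hL1 : L = 1 := by rw [hL, hM]; field_simp
      by_cases hp : x.re = y.re
      · -- degenerate: limit at infinity
        rw [hL1, Real.log_one]
        have hya : ∀ a : ℝ, (y - (a:ℂ)) ≠ 0 := fun a h => by
          have := abs_pos_of_im y hy a; rw [h] at this; simp at this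
        have h1 : Filter.Tendsto (fun a : ℝ => ‖y - a‖) Filter.atTop Filter.atTop := by
          apply Filter.tendsto_atTop_mono (f := fun a : ℝ => a - ‖y‖)
          · intro a
            calc a - ‖y‖ ≤ ‖(a:ℂ)‖ - ‖y‖ := by
                  have : |a| = ‖(a:ℂ)‖ := by rw [Complex.norm_real, Real.norm_eq_abs]
                  have h2 := le_abs_self a
                  linarith
              _ ≤ ‖(a:ℂ) - y‖ := by
                  exact norm_sub_norm_le (a:ℂ) y
              _ = ‖y - a‖ := norm_sub_rev _ _
          · exact Filter.tendsto_atTop_add_const_right _ _ Filter.tendsto_id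
        have h2 : Filter.Tendsto (fun a : ℝ => ((y - a:ℂ))⁻¹) Filter.atTop (nhds 0) := by
          rw [tendsto_zero_iff_norm_tendsto_zero]
          simp only [norm_inv]
          exact Filter.Tendsto.comp tendsto_inv_atTop_zero h1
        have h3 : Filter.Tendsto (fun a : ℝ => ((x - a)/(y - a) : ℂ)) Filter.atTop (nhds 1) := by
          have h4 : Filter.Tendsto (fun a : ℝ => 1 + (x - y) * ((y - a:ℂ))⁻¹) Filter.atTop
              (nhds (1 + (x - y) * 0)) :=
            Filter.Tendsto.add tendsto_const_nhds (Filter.Tendsto.mul tendsto_const_nhds h2)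
          rw [mul_zero, add_zero] at h4
          refine h4.congr fun a => ?_
          rw [eq_div_iff (hya a), add_mul, one_mul, mul_assoc, inv_mul_cancel₀ (hya a), mul_one]
          ring
        have h5 : Filter.Tendsto (fun a : ℝ => ‖((x - a)/(y - a) : ℂ)‖)
            Filter.atTop (nhds 1) := by
          have h5a := (continuous_norm.tendsto 1).comp h3
          rw [norm_one] at h5a
          exact h5a
        have h6 := (Real.continuousAt_log one_ne_zero).tendsto.comp h5
        rw [Real.log_one] at h6
        have h7 : Filter.Tendsto
            (fun a : ℝ => Real.log (‖x - a‖ / ‖y - a‖))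
            Filter.atTop (nhds 0) := by
          refine h6.congr fun a => ?_
          simp [Function.comp, norm_div]
        exact le_of_tendsto h7 (Filter.Eventually.of_forall fun a => le_ciSup bdd a)
      · -- L = 1, x.re ≠ y.re : attained at a linear root
        set a0 : ℝ := (x.re^2 + x.im^2 - y.re^2 - y.im^2)/(2*(x.re - y.re)) with ha0
        have hroot : (x.re - a0)^2 + x.im^2 = L^2 * ((y.re - a0)^2 + y.im^2) := by
          rw [hL1]
          have hpr : x.re - y.re ≠ 0 := sub_ne_zero.mpr hp
          rw [ha0]
          field_simp
          ring
        calc Real.log L = Real.log (‖x - a0‖ / ‖y - a0‖) :=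
              (attain a0 hroot).symm
          _ ≤ _ := le_ciSup bdd a0
    · -- nondegenerate: double root
      set M : ℝ := L^2 with hMdef
      have hs : y.im ≠ 0 := ne_of_gt hy
      have hMe : 4*y.im^2*M = (B+A)^2 := by rw [hMdef, hL]; field_simp; ring
      have hM1 : M ≠ 1 := by
        intro h
        apply hM
        rw [h, mul_one] at hMe
        have h2 : (B+A)^2 = (2*y.im)^2 := by rw [← hMe]; ring
        nlinarith
      have hquad16 : (B+A)^4 - 2*(A^2+B^2)*(B+A)^2 + 16*x.im^2*y.im^2 = 0 := by
        linear_combination (-(B^2 - A^2 + 4*x.im*y.im)) * hd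
      have hquad : y.im^2 * M^2 - ((A^2 + B^2)/2) * M + x.im^2 = 0 := by
        have h16 : 16*y.im^2 * (y.im^2 * M^2 - ((A^2 + B^2)/2) * M + x.im^2) = 0 := by
          linear_combination hquad16 + (4*y.im^2*M + (B+A)^2 - 2*(A^2+B^2)) * hMe
        have h16' : (16:ℝ)*y.im^2 ≠ 0 := by positivity
        exact (mul_eq_zero.mp h16).resolve_left h16'
      have h1M : (1 : ℝ) - M ≠ 0 := fun h => hM1 (by linarith)
      set a0 : ℝ := (x.re - M * y.re)/(1 - M) with ha0
      have e1 : (1 - M) * (x.re - a0) = M*(y.re - x.re) := by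
        rw [ha0]; field_simp; ring
      have e2 : (1 - M) * (y.re - a0) = y.re - x.re := by
        rw [ha0]; field_simp; ring
      have hpr : (x.re - y.re)^2 = (A^2 + B^2)/2 - x.im^2 - y.im^2 := by rw [hA2, hB2]; ring
      have hroot : (x.re - a0)^2 + x.im^2 = L^2 * ((y.re - a0)^2 + y.im^2) := by
        rw [← hMdef]
        have key2 : (1-M)^2 * ((x.re - a0)^2 + x.im^2)
            = (1-M)^2 * (M * ((y.re - a0)^2 + y.im^2)) := by
          linear_combination ((1-M)*(x.re - a0) + M*(y.re - x.re)) * e1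
            - (M*((1-M)*(y.re - a0) + (y.re - x.re))) * e2
            + (1-M)*hquad - M*(1-M)*hpr
        exact mul_left_cancel₀ (pow_ne_zero 2 h1M) key2
      calc Real.log L = Real.log (‖x - a0‖ / ‖y - a0‖) :=
            (attain a0 hroot).symm
        _ ≤ _ := le_ciSup bdd a0
  exact le_antisymm (ciSup_le log_le) lower
/-- The mean-value symmetrization of the Apollonian weak metric of the upper half-plane
is the Poincaré metric. -/
theorem apollonian_halfplane_symmetrization (x y : ℂ) (hx : 0 < x.im) (hy : 0 < y.im) :
    (1 / 2) * ((⨆ a : ℝ, Real.log (‖x - (a : ℂ)‖ / ‖y - (a : ℂ)‖)) +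
        ⨆ a : ℝ, Real.log (‖y - (a : ℂ)‖ / ‖x - (a : ℂ)‖)) =
      (1 / 2) * Real.log ((‖x - (starRingEnd ℂ) y‖ + ‖x - y‖) /
        (‖x - (starRingEnd ℂ) y‖ - ‖x - y‖)) := by
  set A := ‖x - y‖ with hA
  set B := ‖x - (starRingEnd ℂ) y‖ with hB
  have hA2 : A^2 = (x.re - y.re)^2 + (x.im - y.im)^2 := by
    rw [hA, Complex.sq_norm, Complex.normSq_apply]
    simp only [Complex.sub_re, Complex.sub_im]; ring
  have hB2 : B^2 = (x.re - y.re)^2 + (x.im + y.im)^2 := by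
    rw [hB, Complex.sq_norm, Complex.normSq_apply]
    simp only [Complex.sub_re, Complex.sub_im, Complex.conj_re, Complex.conj_im]; ring
  have hAnn : 0 ≤ A := norm_nonneg _
  have hBnn : 0 ≤ B := norm_nonneg _
  have hd : B^2 - A^2 = 4 * x.im * y.im := by rw [hA2, hB2]; ring
  have hAB : A < B := by nlinarith
  have h1 : ‖y - (starRingEnd ℂ) x‖ = B := by
    rw [hB, ← Complex.norm_conj (y - (starRingEnd ℂ) x), map_sub, Complex.conj_conj,
      ← norm_neg]
    ring_nf
  have h2 : ‖y - x‖ = A := by rw [hA]; exact norm_sub_rev _ _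
  rw [key x y hx hy, key y x hy hx, h1, h2, ← hA, ← hB]
  have p1 : (B + A) / (2 * y.im) ≠ 0 := ne_of_gt (div_pos (by linarith) (by linarith))
  have p2 : (B + A) / (2 * x.im) ≠ 0 := ne_of_gt (div_pos (by linarith) (by linarith))
  rw [← Real.log_mul p1 p2]
  congr 2
  rw [div_mul_div_comm, div_eq_div_iff (by nlinarith) (by linarith)]
  linear_combination (B + A) * hd
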